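/- (i) The family (w(a_v))_{v ∈ B} is a ℤ-basis of ℤ^B. (ii) Let a ∈ 𝒟 and let (c_v)_{v ∈ B} be the unique integers with w(a) = ∑_{v ∈ B} c_v · w(a_v). Then for every nonempty partition λ ∈ 𝒫(n,r): if a is not the in-arrow, then ∑_{v ∈ B} χ_λ(v)·c_v equals 1 if λ crosses a and equals 0 otherwise; and if a is the in-arrow, then ∑_{v ∈ B} χ_λ(v)·c_v = −1. (This is the duality pairing ⟨m_λ, w_a⟩ between the vertices of the divisor polytope P_{D_∅} and the vertices of P_{n,r}.) -/

import Mathlib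

open scoped Classical

/-- `lam : ℕ → ℕ` is a partition in the `r × (n-r)` box, with the conventions
`lam 0 = n - r` and `lam t = 0` for `t > r` built in. -/
def IsPartition (n r : ℕ) (lam : ℕ → ℕ) : Prop :=
  lam 0 = n - r ∧ (∀ t, r < t → lam t = 0) ∧ ∀ t, lam (t + 1) ≤ lam t

/-- The edge set `E(λ)` of the monotone lattice path of the partition `λ`. -/
def pathEdges (r : ℕ) (lam : ℕ → ℕ) : Set ((ℕ × ℕ) × Bool) :=
  {e | (∃ t, 1 ≤ t ∧ t ≤ r ∧ e = ((lam t, r - t), true)) ∨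
       (∃ t x, t ≤ r ∧ lam (t + 1) ≤ x ∧ x + 1 ≤ lam t ∧ e = ((x, r - t), false))}

/-- `χ_λ ∈ ℤ^B`: box `(t,j)` corresponds to the index `(t-1, j-1) : Fin r × Fin (n-r)`. -/
def chi (n r : ℕ) (lam : ℕ → ℕ) : Fin r × Fin (n - r) → ℤ := fun p =>
  if lam (p.1.1 + 1) = p.2.1 + 1 ∧ (p.2.1 + 1 < n - r ∨ lam (p.1.1 + 2) < n - r) then 1 else 0

/-- `e_{(t,j)} ∈ ℤ^B` (1-indexed box coordinates). -/
def basisVec (n r : ℕ) (t j : ℕ) : Fin r × Fin (n - r) → ℤ := fun p =>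
  if p.1.1 + 1 = t ∧ p.2.1 + 1 = j then 1 else 0

/-- The vector `w(a_v)` for the distinguished dual arrow `a_v` assigned to the box
`v = (t,j)`: the horizontal arrow `(t,j) → (t,j+1)` if `j < k`; the out-arrow if
`(t,j) = (r,k)`; the vertical arrow `(t,k) → (t+1,k)` if `j = k` and `t < r`. -/
def wA (n r : ℕ) (v : Fin r × Fin (n - r)) : Fin r × Fin (n - r) → ℤ :=
  if v.2.1 + 1 < n - r then
    basisVec n r (v.1.1 + 1) (v.2.1 + 2) - basisVec n r (v.1.1 + 1) (v.2.1 + 1)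
  else if v.1.1 + 1 < r then
    basisVec n r (v.1.1 + 2) (v.2.1 + 1) - basisVec n r (v.1.1 + 1) (v.2.1 + 1)
  else
    -basisVec n r r (n - r)

/-- The arrows of the dual quiver. -/
inductive DArrow where
  | horiz (t j : ℕ)
  | vert (t j : ℕ)
  | inAr
  | outAr
deriving DecidableEq

/-- The index constraints making a `DArrow` an actual arrow of the dual quiver of the
ladder diagram of `Gr(n,r)`. -/
def DArrow.valid (n r : ℕ) : DArrow → Prop
  | .horiz t j => 1 ≤ t ∧ t ≤ r ∧ 1 ≤ j ∧ j + 1 ≤ n - r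
  | .vert t j => 1 ≤ t ∧ t + 1 ≤ r ∧ 1 ≤ j ∧ j ≤ n - r
  | .inAr => True
  | .outAr => True

/-- The vector `w(a) ∈ ℤ^B` attached to a dual arrow `a`. -/
def DArrow.w (n r : ℕ) : DArrow → (Fin r × Fin (n - r) → ℤ)
  | .horiz t j => basisVec n r t (j + 1) - basisVec n r t j
  | .vert t j => basisVec n r (t + 1) j - basisVec n r t j
  | .inAr => basisVec n r 1 1
  | .outAr => -basisVec n r r (n - r)

/-- The unique grid edge crossed by a dual arrow. -/
def DArrow.crossEdge (n r : ℕ) : DArrow → ((ℕ × ℕ) × Bool)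
  | .horiz t j => ((j, r - t), true)
  | .vert t j => ((j - 1, r - t), false)
  | .inAr => ((0, r), false)
  | .outAr => ((n - r, 0), true)

lemma wA_apply (n r : ℕ) (v u : Fin r × Fin (n - r)) :
    wA n r v u =
      (if v.1.1 = u.1.1 ∧ v.2.1 + 1 = u.2.1 then 1 else 0)
    + (if v.2.1 + 1 = n - r ∧ v.1.1 + 1 = u.1.1 ∧ v.2.1 = u.2.1 then 1 else 0)
    - (if v.1.1 = u.1.1 ∧ v.2.1 = u.2.1 then 1 else 0) := by
  have hv1 := v.1.2; have hv2 := v.2.2; have hu1 := u.1.2; have hu2 := u.2.2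
  simp only [wA]
  split_ifs with h1 h2 <;>
    simp only [basisVec, Pi.sub_apply, Pi.neg_apply] <;> split_ifs <;> omega

lemma sum_pick (n r : ℕ) (f : Fin r × Fin (n - r) → ℤ) (P : ℕ → ℕ → Prop)
    [∀ a b, Decidable (P a b)] (a b : ℕ) (ha : a < r) (hb : b < n - r)
    (hP : P a b) (huniq : ∀ x y, P x y → x = a ∧ y = b) :
    ∑ v : Fin r × Fin (n - r), f v * (if P v.1.1 v.2.1 then 1 else 0)
      = f (⟨a, ha⟩, ⟨b, hb⟩) := by
  rw [Finset.sum_eq_single ((⟨a, ha⟩ : Fin r), (⟨b, hb⟩ : Fin (n - r)))]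
  · rw [if_pos hP, mul_one]
  · intro v _ hv
    rw [if_neg, mul_zero]
    intro hPv
    obtain ⟨e1, e2⟩ := huniq _ _ hPv
    exact hv (Prod.ext (Fin.ext e1) (Fin.ext e2))
  · intro h'; exact absurd (Finset.mem_univ _) h'

lemma sum_pick0 (n r : ℕ) (f : Fin r × Fin (n - r) → ℤ) (P : ℕ → ℕ → Prop)
    [∀ a b, Decidable (P a b)] (hnone : ∀ x y, ¬ P x y) :
    ∑ v : Fin r × Fin (n - r), f v * (if P v.1.1 v.2.1 then 1 else 0) = 0 :=
  Finset.sum_eq_zero fun v _ => by rw [if_neg (hnone _ _), mul_zero]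

def fmap (n r : ℕ) : (Fin r × Fin (n - r) → ℤ) →ₗ[ℤ] (Fin r × Fin (n - r) → ℤ) where
  toFun := fun c => ∑ v, c v • wA n r v
  map_add' := by intros a b; simp [add_smul, Finset.sum_add_distrib]
  map_smul' := by
    intros m a
    simp only [RingHom.id_apply, Finset.smul_sum, smul_smul]
    apply Finset.sum_congr rfl
    intro v _
    rw [Pi.smul_apply, smul_eq_mul]

lemma fmap_apply (n r : ℕ) (c : Fin r × Fin (n - r) → ℤ) :
    fmap n r c = ∑ v, c v • wA n r v := rfl

lemma eval_apply (n r : ℕ) (c : Fin r × Fin (n - r) → ℤ) (u : Fin r × Fin (n - r)) :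
    fmap n r c u =
      (if 1 ≤ u.2.1 then c (u.1, ⟨u.2.1 - 1, Nat.lt_of_le_of_lt (Nat.sub_le _ _) u.2.2⟩) else 0)
    + (if u.2.1 + 1 = n - r ∧ 1 ≤ u.1.1 then
        c (⟨u.1.1 - 1, Nat.lt_of_le_of_lt (Nat.sub_le _ _) u.1.2⟩, u.2) else 0)
    - c u := by
  have : fmap n r c u = ∑ v, c v * wA n r v u := by
    rw [fmap_apply]; simp [Finset.sum_apply]
  rw [this]
  simp only [wA_apply, mul_add, mul_sub, Finset.sum_add_distrib, Finset.sum_sub_distrib]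
  congr 1
  · congr 1
    · by_cases h : 1 ≤ u.2.1
      · rw [if_pos h]
        exact sum_pick n r c (fun x y => x = u.1.1 ∧ y + 1 = u.2.1) u.1.1 (u.2.1 - 1)
          u.1.2 (Nat.lt_of_le_of_lt (Nat.sub_le _ _) u.2.2)
          ⟨rfl, by omega⟩ (fun x y hxy => ⟨hxy.1, by omega⟩)
      · rw [if_neg h]
        exact sum_pick0 n r c (fun x y => x = u.1.1 ∧ y + 1 = u.2.1)
          (fun x y hxy => by omega)
    · by_cases h : u.2.1 + 1 = n - r ∧ 1 ≤ u.1.1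
      · rw [if_pos h]
        exact sum_pick n r c (fun x y => y + 1 = n - r ∧ x + 1 = u.1.1 ∧ y = u.2.1)
          (u.1.1 - 1) u.2.1 (Nat.lt_of_le_of_lt (Nat.sub_le _ _) u.1.2) u.2.2
          ⟨by omega, by omega, rfl⟩ (fun x y hxy => ⟨by omega, by omega⟩)
      · rw [if_neg h]
        exact sum_pick0 n r c (fun x y => y + 1 = n - r ∧ x + 1 = u.1.1 ∧ y = u.2.1)
          (fun x y hxy => h ⟨by omega, by omega⟩)
  · exact sum_pick n r c (fun x y => x = u.1.1 ∧ y = u.2.1) u.1.1 u.2.1 u.1.2 u.2.2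
      ⟨rfl, rfl⟩ (fun x y hxy => hxy)

lemma fmap_zero (n r : ℕ) (c : Fin r × Fin (n - r) → ℤ) (h : fmap n r c = 0) : c = 0 := by
  have key : ∀ N m p (hm : m < r) (hp : p < n - r), m + p ≤ N →
      c (⟨m, hm⟩, ⟨p, hp⟩) = 0 := by
    intro N
    induction N with
    | zero =>
      intro m p hm hp hN
      have h1 := congrFun h (⟨m, hm⟩, ⟨p, hp⟩)
      rw [eval_apply] at h1
      simp only [Pi.zero_apply] at h1
      rw [if_neg (by omega), if_neg (by omega)] at h1
      omega
    | succ N ih =>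
      intro m p hm hp hN
      have h1 := congrFun h (⟨m, hm⟩, ⟨p, hp⟩)
      rw [eval_apply] at h1
      simp only [Pi.zero_apply] at h1
      by_cases hp1 : 1 ≤ p
      · rw [if_pos (show 1 ≤ ((⟨m,hm⟩,⟨p,hp⟩) : Fin r × Fin (n-r)).2.1 from hp1)] at h1
        rw [show (((⟨m,hm⟩,⟨p,hp⟩) : Fin r × Fin (n-r)).1,
            (⟨((⟨m,hm⟩,⟨p,hp⟩) : Fin r × Fin (n-r)).2.1 - 1, _⟩ : Fin (n-r)))
            = (⟨m, hm⟩, ⟨p - 1, Nat.lt_of_le_of_lt (Nat.sub_le _ _) hp⟩) from rfl] at h1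
        rw [ih m (p - 1) hm _ (by omega)] at h1
        by_cases hm1 : p + 1 = n - r ∧ 1 ≤ m
        · rw [if_pos hm1] at h1
          rw [show ((⟨((⟨m,hm⟩,⟨p,hp⟩) : Fin r × Fin (n-r)).1.1 - 1, _⟩ : Fin r),
              ((⟨m,hm⟩,⟨p,hp⟩) : Fin r × Fin (n-r)).2)
              = (⟨m - 1, Nat.lt_of_le_of_lt (Nat.sub_le _ _) hm⟩, ⟨p, hp⟩) from rfl] at h1
          rw [ih (m - 1) p _ hp (by omega)] at h1
          omega
        · rw [if_neg hm1] at h1; omega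
      · rw [if_neg hp1] at h1
        by_cases hm1 : p + 1 = n - r ∧ 1 ≤ m
        · rw [if_pos hm1] at h1
          rw [show ((⟨((⟨m,hm⟩,⟨p,hp⟩) : Fin r × Fin (n-r)).1.1 - 1, _⟩ : Fin r),
              ((⟨m,hm⟩,⟨p,hp⟩) : Fin r × Fin (n-r)).2)
              = (⟨m - 1, Nat.lt_of_le_of_lt (Nat.sub_le _ _) hm⟩, ⟨p, hp⟩) from rfl] at h1
          rw [ih (m - 1) p _ hp (by omega)] at h1
          omega
        · rw [if_neg hm1] at h1; omega
  funext u
  obtain ⟨⟨m, hm⟩, ⟨p, hp⟩⟩ := u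
  exact key (m + p) m p hm hp le_rfl

lemma fmap_inj (n r : ℕ) : Function.Injective (fmap n r) := by
  intro c1 c2 h
  have := fmap_zero n r (c1 - c2) (by rw [map_sub, h, sub_self])
  funext u
  have := congrFun this u
  simp only [Pi.sub_apply, Pi.zero_apply] at this
  omega

def cP (n r : ℕ) (u : Fin r × Fin (n - r)) : Fin r × Fin (n - r) → ℤ := fun v =>
  if (v.1.1 = u.1.1 ∧ u.2.1 ≤ v.2.1) ∨ (u.1.1 < v.1.1 ∧ v.2.1 + 1 = n - r) then -1 else 0

lemma fmap_cP (n r : ℕ) (u : Fin r × Fin (n - r)) :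
    fmap n r (cP n r u) = fun x => if u = x then 1 else 0 := by
  funext x
  rw [eval_apply]
  have hx1 := x.1.2; have hx2 := x.2.2; have hu1 := u.1.2; have hu2 := u.2.2
  have he : (u = x) ↔ (u.1.1 = x.1.1 ∧ u.2.1 = x.2.1) := by
    rw [Prod.ext_iff, Fin.ext_iff, Fin.ext_iff]
  rw [if_congr he rfl rfl]
  simp only [cP]
  split_ifs <;> omega

lemma fmap_surj (n r : ℕ) : Function.Surjective (fmap n r) := by
  intro c
  refine ⟨∑ u, c u • cP n r u, ?_⟩
  rw [map_sum]
  have : ∀ u : Fin r × Fin (n - r), fmap n r (c u • cP n r u)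
      = c u • fun x => if u = x then (1 : ℤ) else 0 := by
    intro u; rw [map_smul, fmap_cP]
  rw [Finset.sum_congr rfl fun u _ => this u]
  exact (pi_eq_sum_univ c).symm

noncomputable def wBasis (n r : ℕ) : Module.Basis (Fin r × Fin (n - r)) ℤ (Fin r × Fin (n - r) → ℤ) :=
  (Pi.basisFun ℤ (Fin r × Fin (n - r))).map
    (LinearEquiv.ofBijective (fmap n r) (show Function.Bijective (fmap n r) from ⟨fmap_inj n r, fmap_surj n r⟩))

lemma wBasis_apply (n r : ℕ) (v : Fin r × Fin (n - r)) : wBasis n r v = wA n r v := by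
  rw [wBasis, Module.Basis.map_apply, Pi.basisFun_apply, LinearEquiv.ofBijective_apply]
  rw [fmap_apply, Finset.sum_eq_single v]
  · simp
  · intro u _ hu; simp [Pi.single_eq_of_ne hu]
  · intro h; exact absurd (Finset.mem_univ _) h


lemma lam_mono (lam : ℕ → ℕ) (h : ∀ t, lam (t + 1) ≤ lam t) :
    ∀ s t, s ≤ t → lam t ≤ lam s := by
  intro s t hst
  induction t with
  | zero => have : s = 0 := Nat.le_zero.mp hst; subst this; exact le_rfl
  | succ t ih =>
    rcases Nat.lt_or_ge s (t + 1) with h' | h'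
    · exact le_trans (h t) (ih (by omega))
    · have : s = t + 1 := by omega
      subst this; exact le_rfl

lemma lam_le_k (n r : ℕ) (lam : ℕ → ℕ) (hlam : IsPartition n r lam) :
    ∀ t, lam t ≤ n - r := fun t =>
  le_trans (lam_mono lam hlam.2.2 0 t (Nat.zero_le _)) (le_of_eq hlam.1)

lemma cross_horiz (r : ℕ) (lam : ℕ → ℕ) (t j : ℕ) (h1 : 1 ≤ t) (h2 : t ≤ r) :
    (((j, r - t), true) ∈ pathEdges r lam) ↔ lam t = j := by
  constructor
  · intro hmem
    simp only [pathEdges, Set.mem_setOf_eq] at hmem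
    rcases hmem with ⟨s, hs1, hs2, he⟩ | ⟨s, x, hs, hx1, hx2, he⟩
    · simp only [Prod.mk.injEq] at he
      obtain ⟨⟨hej, het⟩, -⟩ := he
      have hst : s = t := by omega
      subst hst; omega
    · simp only [Prod.mk.injEq] at he
      exact absurd he.2 (by simp)
  · intro h'
    exact Or.inl ⟨t, h1, h2, by rw [h']⟩

lemma cross_vert (r : ℕ) (lam : ℕ → ℕ) (t j : ℕ) (h1 : 1 ≤ t) (h2 : t + 1 ≤ r)
    (h3 : 1 ≤ j) :
    (((j - 1, r - t), false) ∈ pathEdges r lam) ↔ lam (t + 1) < j ∧ j ≤ lam t := by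
  constructor
  · intro hmem
    simp only [pathEdges, Set.mem_setOf_eq] at hmem
    rcases hmem with ⟨s, hs1, hs2, he⟩ | ⟨s, x, hs, hx1, hx2, he⟩
    · simp only [Prod.mk.injEq] at he
      exact absurd he.2 (by simp)
    · simp only [Prod.mk.injEq] at he
      obtain ⟨⟨hej, het⟩, -⟩ := he
      have hst : s = t := by omega
      subst hst; omega
  · intro h'
    exact Or.inr ⟨t, j - 1, by omega, by omega, by omega, rfl⟩

lemma cross_out (n r : ℕ) (lam : ℕ → ℕ) (hr : 1 ≤ r) :
    (((n - r, 0), true) ∈ pathEdges r lam) ↔ lam r = n - r := by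
  constructor
  · intro hmem
    simp only [pathEdges, Set.mem_setOf_eq] at hmem
    rcases hmem with ⟨s, hs1, hs2, he⟩ | ⟨s, x, hs, hx1, hx2, he⟩
    · simp only [Prod.mk.injEq] at he
      obtain ⟨⟨hej, het⟩, -⟩ := he
      have hst : s = r := by omega
      subst hst; omega
    · simp only [Prod.mk.injEq] at he
      exact absurd he.2 (by simp)
  · intro h'
    exact Or.inl ⟨r, hr, le_rfl, by rw [h', Nat.sub_self]⟩

lemma chiRowSum (n r : ℕ) (lam : ℕ → ℕ) (t : ℕ) (h1 : 1 ≤ t) (h2 : t ≤ r)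
    (hle : lam t ≤ n - r) (P : ℕ → Prop) [DecidablePred P] :
    ∑ v : Fin r × Fin (n - r), chi n r lam v * (if v.1.1 + 1 = t ∧ P v.2.1 then (1:ℤ) else 0)
      = if 1 ≤ lam t ∧ (lam t < n - r ∨ lam (t + 1) < n - r) ∧ P (lam t - 1) then 1 else 0 := by
  have e1 : t - 1 + 1 = t := by omega
  have e2 : t - 1 + 2 = t + 1 := by omega
  by_cases hmain : 1 ≤ lam t ∧ (lam t < n - r ∨ lam (t + 1) < n - r) ∧ P (lam t - 1)
  · rw [if_pos hmain]
    obtain ⟨hm1, hm2, hm3⟩ := hmain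
    rw [Finset.sum_eq_single ((⟨t - 1, by omega⟩ : Fin r), (⟨lam t - 1, by omega⟩ : Fin (n - r)))]
    · simp only [chi]
      simp only [e1, e2]
      rw [if_pos (⟨trivial, hm3⟩ : True ∧ P (lam t - 1)), mul_one]
      rw [if_pos ⟨by omega, by omega⟩]
    · intro v _ hv
      by_cases hC : v.1.1 + 1 = t ∧ P v.2.1
      · rw [if_pos hC, mul_one]
        simp only [chi]
        have ev1 : v.1.1 + 1 = t := hC.1
        have ev2 : v.1.1 + 2 = t + 1 := by omega
        simp only [ev1, ev2]
        rw [if_neg]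
        rintro ⟨q1, q2⟩
        exact hv (Prod.ext (Fin.ext (show v.1.1 = t - 1 by omega))
          (Fin.ext (show v.2.1 = lam t - 1 by omega)))
      · rw [if_neg hC, mul_zero]
    · intro h'; exact absurd (Finset.mem_univ _) h'
  · rw [if_neg hmain]
    apply Finset.sum_eq_zero
    intro v _
    by_cases hC : v.1.1 + 1 = t ∧ P v.2.1
    · rw [if_pos hC, mul_one]
      simp only [chi]
      have ev1 : v.1.1 + 1 = t := hC.1
      have ev2 : v.1.1 + 2 = t + 1 := by omega
      simp only [ev1, ev2]
      rw [if_neg]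
      rintro ⟨q1, q2⟩
      apply hmain
      have hv2 : v.2.1 = lam t - 1 := by omega
      refine ⟨by omega, by omega, ?_⟩
      rw [← hv2]; exact hC.2
    · rw [if_neg hC, mul_zero]

lemma chiColSum (n r : ℕ) (lam : ℕ → ℕ) (hlam : IsPartition n r lam) (hr : 1 ≤ r)
    (hk : 1 ≤ n - r) :
    ∑ v : Fin r × Fin (n - r),
        chi n r lam v * (if 1 ≤ v.1.1 ∧ v.2.1 + 1 = n - r then (1:ℤ) else 0)
      = if lam 2 = n - r then 1 else 0 := by
  have hmono := hlam.2.2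
  have hlek : ∀ s, lam s ≤ n - r := lam_le_k n r lam hlam
  rw [Fintype.sum_prod_type]
  have colstep : ∀ a : Fin r,
      (∑ b : Fin (n - r), chi n r lam (a, b) * (if 1 ≤ (a, b).1.1 ∧ (a, b).2.1 + 1 = n - r then (1:ℤ) else 0))
      = (fun i => if 1 ≤ i ∧ lam (i + 1) = n - r ∧ lam (i + 2) < n - r then (1:ℤ) else 0) a.1 := by
    intro a
    have hm : lam (a.1 + 2) ≤ lam (a.1 + 1) := hmono (a.1 + 1)
    have hl := hlek (a.1 + 1)
    simp only []
    rw [Finset.sum_eq_single (⟨n - r - 1, by omega⟩ : Fin (n - r))]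
    · simp only [chi]
      split_ifs <;> omega
    · intro b _ hb
      rw [if_neg, mul_zero]
      rintro ⟨-, e⟩; exact hb (Fin.ext (show b.1 = n - r - 1 by omega))
    · intro h'; exact absurd (Finset.mem_univ _) h'
  rw [Finset.sum_congr rfl fun a _ => colstep a]
  rw [Fin.sum_univ_eq_sum_range (fun i => if 1 ≤ i ∧ lam (i + 1) = n - r ∧ lam (i + 2) < n - r then (1:ℤ) else 0) r]
  obtain ⟨m, rfl⟩ : ∃ m, r = m + 1 := ⟨r - 1, by omega⟩
  rw [Finset.sum_range_succ']
  rw [if_neg (by omega)]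
  have step : ∀ i ∈ Finset.range m,
      (if 1 ≤ i + 1 ∧ lam (i + 1 + 1) = n - (m + 1) ∧ lam (i + 1 + 2) < n - (m + 1) then (1:ℤ) else 0)
      = (fun i => if lam (i + 2) = n - (m + 1) then (1:ℤ) else 0) i
        - (fun i => if lam (i + 2) = n - (m + 1) then (1:ℤ) else 0) (i + 1) := by
    intro i _
    have hm1 : lam (i + 3) ≤ lam (i + 2) := hmono (i + 2)
    have hl1 := hlek (i + 2)
    have hl2 := hlek (i + 3)
    have e1 : i + 1 + 1 = i + 2 := by omega
    have e2 : i + 1 + 2 = i + 3 := by omega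
    simp only [e1, e2]
    split_ifs <;> omega
  rw [Finset.sum_congr rfl step, Finset.sum_range_sub']
  have hr1 : lam (m + 2) = 0 := hlam.2.1 (m + 2) (by omega)
  have e0 : (0:ℕ) + 2 = 2 := rfl
  rw [e0]
  rw [if_neg (show ¬ lam (m + 2) = n - (m + 1) by omega), sub_zero, add_zero]

lemma fmap_cH (n r t j : ℕ) (h1 : 1 ≤ t) (h2 : t ≤ r) (h3 : 1 ≤ j) (h4 : j + 1 ≤ n - r) :
    fmap n r (fun v => if v.1.1 + 1 = t ∧ v.2.1 + 1 = j then (1:ℤ) else 0)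
      = basisVec n r t (j + 1) - basisVec n r t j := by
  funext u
  rw [eval_apply]
  have hu1 := u.1.2; have hu2 := u.2.2
  simp only [basisVec, Pi.sub_apply]
  split_ifs <;> omega

lemma fmap_cV (n r t j : ℕ) (h1 : 1 ≤ t) (h2 : t + 1 ≤ r) (h3 : 1 ≤ j) (h4 : j ≤ n - r) :
    fmap n r (fun v => (if v.1.1 + 1 = t ∧ j ≤ v.2.1 + 1 then (1:ℤ) else 0)
        - (if v.1.1 + 1 = t + 1 ∧ (j ≤ v.2.1 + 1 ∧ v.2.1 + 2 ≤ n - r) then (1:ℤ) else 0))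
      = basisVec n r (t + 1) j - basisVec n r t j := by
  funext u
  rw [eval_apply]
  have hu1 := u.1.2; have hu2 := u.2.2
  simp only [basisVec, Pi.sub_apply]
  split_ifs <;> omega

lemma fmap_cO (n r : ℕ) (hr : 1 ≤ r) (hk : 1 ≤ n - r) :
    fmap n r (fun v => if v.1.1 + 1 = r ∧ v.2.1 + 1 = n - r then (1:ℤ) else 0)
      = -basisVec n r r (n - r) := by
  funext u
  rw [eval_apply]
  have hu1 := u.1.2; have hu2 := u.2.2
  simp only [basisVec, Pi.neg_apply]
  split_ifs <;> omega

lemma fmap_cIn (n r : ℕ) (hr : 1 ≤ r) (hk : 1 ≤ n - r) :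
    fmap n r (fun v => -(if v.1.1 + 1 = 1 ∧ 0 ≤ v.2.1 then (1:ℤ) else 0)
        - (if 1 ≤ v.1.1 ∧ v.2.1 + 1 = n - r then (1:ℤ) else 0))
      = basisVec n r 1 1 := by
  funext u
  rw [eval_apply]
  have hu1 := u.1.2; have hu2 := u.2.2
  simp only [basisVec]
  split_ifs <;> omega

lemma pair_horiz (n r : ℕ) (lam : ℕ → ℕ) (hlam : IsPartition n r lam) (t j : ℕ)
    (h1 : 1 ≤ t) (h2 : t ≤ r) (h3 : 1 ≤ j) (h4 : j + 1 ≤ n - r) :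
    ∑ v : Fin r × Fin (n - r), chi n r lam v * (if v.1.1 + 1 = t ∧ v.2.1 + 1 = j then (1:ℤ) else 0)
      = if ((j, r - t), true) ∈ pathEdges r lam then 1 else 0 := by
  have hle := lam_le_k n r lam hlam t
  have hm := hlam.2.2 t
  have SA := chiRowSum n r lam t h1 h2 hle (fun y => y + 1 = j)
  refine SA.trans ?_
  rw [if_congr (cross_horiz r lam t j h1 h2) rfl rfl]
  split_ifs <;> omega

lemma pair_vert (n r : ℕ) (lam : ℕ → ℕ) (hlam : IsPartition n r lam) (t j : ℕ)
    (h1 : 1 ≤ t) (h2 : t + 1 ≤ r) (h3 : 1 ≤ j) (h4 : j ≤ n - r) :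
    ∑ v : Fin r × Fin (n - r), chi n r lam v *
        ((if v.1.1 + 1 = t ∧ j ≤ v.2.1 + 1 then (1:ℤ) else 0)
          - (if v.1.1 + 1 = t + 1 ∧ (j ≤ v.2.1 + 1 ∧ v.2.1 + 2 ≤ n - r) then (1:ℤ) else 0))
      = if ((j - 1, r - t), false) ∈ pathEdges r lam then 1 else 0 := by
  have hle := lam_le_k n r lam hlam t
  have hle2 := lam_le_k n r lam hlam (t + 1)
  have hm1 := hlam.2.2 t
  have hm2 := hlam.2.2 (t + 1)
  have hsplit : ∑ v : Fin r × Fin (n - r), chi n r lam v *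
        ((if v.1.1 + 1 = t ∧ j ≤ v.2.1 + 1 then (1:ℤ) else 0)
          - (if v.1.1 + 1 = t + 1 ∧ (j ≤ v.2.1 + 1 ∧ v.2.1 + 2 ≤ n - r) then (1:ℤ) else 0))
      = (∑ v : Fin r × Fin (n - r), chi n r lam v * (if v.1.1 + 1 = t ∧ j ≤ v.2.1 + 1 then (1:ℤ) else 0))
        - ∑ v : Fin r × Fin (n - r), chi n r lam v *
            (if v.1.1 + 1 = t + 1 ∧ (j ≤ v.2.1 + 1 ∧ v.2.1 + 2 ≤ n - r) then (1:ℤ) else 0) := by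
    rw [← Finset.sum_sub_distrib]
    exact Finset.sum_congr rfl fun v _ => by ring
  rw [hsplit]
  have SA := chiRowSum n r lam t h1 (by omega) hle (fun y => j ≤ y + 1)
  have SB := chiRowSum n r lam (t + 1) (by omega) h2 hle2 (fun y => j ≤ y + 1 ∧ y + 2 ≤ n - r)
  refine (congrArg₂ (· - ·) SA SB).trans ?_
  rw [if_congr (cross_vert r lam t j h1 h2 h3) rfl rfl]
  split_ifs <;> omega

lemma pair_out (n r : ℕ) (lam : ℕ → ℕ) (hlam : IsPartition n r lam) (hr : 1 ≤ r)
    (hk : 1 ≤ n - r) :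
    ∑ v : Fin r × Fin (n - r), chi n r lam v *
        (if v.1.1 + 1 = r ∧ v.2.1 + 1 = n - r then (1:ℤ) else 0)
      = if ((n - r, 0), true) ∈ pathEdges r lam then 1 else 0 := by
  have hle := lam_le_k n r lam hlam r
  have hz : lam (r + 1) = 0 := hlam.2.1 (r + 1) (by omega)
  have SA := chiRowSum n r lam r hr le_rfl hle (fun y => y + 1 = n - r)
  refine SA.trans ?_
  rw [if_congr (cross_out n r lam hr) rfl rfl]
  split_ifs <;> omega

lemma pair_in (n r : ℕ) (lam : ℕ → ℕ) (hlam : IsPartition n r lam) (hr : 1 ≤ r)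
    (hk : 1 ≤ n - r) (hlam1 : 1 ≤ lam 1) :
    ∑ v : Fin r × Fin (n - r), chi n r lam v *
        (-(if v.1.1 + 1 = 1 ∧ 0 ≤ v.2.1 then (1:ℤ) else 0)
          - (if 1 ≤ v.1.1 ∧ v.2.1 + 1 = n - r then (1:ℤ) else 0))
      = -1 := by
  have hle := lam_le_k n r lam hlam 1
  have hle2 := lam_le_k n r lam hlam 2
  have hm1 := hlam.2.2 1
  have hsplit : ∑ v : Fin r × Fin (n - r), chi n r lam v *
        (-(if v.1.1 + 1 = 1 ∧ 0 ≤ v.2.1 then (1:ℤ) else 0)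
          - (if 1 ≤ v.1.1 ∧ v.2.1 + 1 = n - r then (1:ℤ) else 0))
      = -(∑ v : Fin r × Fin (n - r), chi n r lam v * (if v.1.1 + 1 = 1 ∧ 0 ≤ v.2.1 then (1:ℤ) else 0))
        - ∑ v : Fin r × Fin (n - r), chi n r lam v *
            (if 1 ≤ v.1.1 ∧ v.2.1 + 1 = n - r then (1:ℤ) else 0) := by
    rw [← Finset.sum_neg_distrib, ← Finset.sum_sub_distrib]
    exact Finset.sum_congr rfl fun v _ => by ring
  rw [hsplit]
  have SA := chiRowSum n r lam 1 le_rfl hr hle (fun y => 0 ≤ y)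
  have e : (1:ℕ) + 1 = 2 := rfl
  rw [e] at SA
  have SB := chiColSum n r lam hlam hr hk
  refine (congrArg₂ (fun (x y : ℤ) => -x - y) SA SB).trans ?_
  have hm1' : lam 2 ≤ lam 1 := hm1
  split_ifs <;> omega

/-- (i) the family `(w(a_v))_{v ∈ B}` is a `ℤ`-basis of `ℤ^B`; (ii) if
`w(a) = ∑_v c_v·w(a_v)`, then for every nonempty partition `λ`, the pairing
`∑_v χ_λ(v)·c_v` equals `1` or `0` according to whether `λ` crosses `a` (when `a` is not
the in-arrow), and equals `-1` when `a` is the in-arrow. -/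
theorem dual_pairing (n r : ℕ) (hr : 1 ≤ r) (hrn : r < n) :
    (∃ b : Module.Basis (Fin r × Fin (n - r)) ℤ (Fin r × Fin (n - r) → ℤ), ∀ v, b v = wA n r v) ∧
    (∀ a : DArrow, a.valid n r →
      ∀ c : Fin r × Fin (n - r) → ℤ,
        DArrow.w n r a = ∑ v, c v • wA n r v →
        ∀ lam : ℕ → ℕ, IsPartition n r lam → (∃ t, 1 ≤ t ∧ t ≤ r ∧ 1 ≤ lam t) →
          (a ≠ DArrow.inAr →
            (∑ v, chi n r lam v * c v) =
              (if DArrow.crossEdge n r a ∈ pathEdges r lam then 1 else 0)) ∧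
          (a = DArrow.inAr → (∑ v, chi n r lam v * c v) = -1)) := by
  have hk : 1 ≤ n - r := by omega
  constructor
  · exact ⟨wBasis n r, wBasis_apply n r⟩
  · intro a hval c hsum lam hlam hne
    have hlam1 : 1 ≤ lam 1 := by
      obtain ⟨t0, ht1, ht2, ht3⟩ := hne
      have := lam_mono lam hlam.2.2 1 t0 ht1
      omega
    cases a with
    | horiz t j =>
      obtain ⟨h1, h2, h3, h4⟩ := hval
      have hc : c = fun v => if v.1.1 + 1 = t ∧ v.2.1 + 1 = j then (1:ℤ) else 0 := by
        apply fmap_inj n r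
        rw [fmap_apply, ← hsum, fmap_cH n r t j h1 h2 h3 h4]
        rfl
      refine ⟨fun _ => ?_, fun h => DArrow.noConfusion h⟩
      rw [hc]
      exact pair_horiz n r lam hlam t j h1 h2 h3 h4
    | vert t j =>
      obtain ⟨h1, h2, h3, h4⟩ := hval
      have hc : c = fun v => (if v.1.1 + 1 = t ∧ j ≤ v.2.1 + 1 then (1:ℤ) else 0)
          - (if v.1.1 + 1 = t + 1 ∧ (j ≤ v.2.1 + 1 ∧ v.2.1 + 2 ≤ n - r) then (1:ℤ) else 0) := by
        apply fmap_inj n r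
        rw [fmap_apply, ← hsum, fmap_cV n r t j h1 h2 h3 h4]
        rfl
      refine ⟨fun _ => ?_, fun h => DArrow.noConfusion h⟩
      rw [hc]
      exact pair_vert n r lam hlam t j h1 h2 h3 h4
    | inAr =>
      have hc : c = fun v => -(if v.1.1 + 1 = 1 ∧ 0 ≤ v.2.1 then (1:ℤ) else 0)
          - (if 1 ≤ v.1.1 ∧ v.2.1 + 1 = n - r then (1:ℤ) else 0) := by
        apply fmap_inj n r
        rw [fmap_apply, ← hsum, fmap_cIn n r hr hk]
        rfl
      refine ⟨fun h => absurd rfl h, fun _ => ?_⟩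
      rw [hc]
      exact pair_in n r lam hlam hr hk hlam1
    | outAr =>
      have hc : c = fun v => if v.1.1 + 1 = r ∧ v.2.1 + 1 = n - r then (1:ℤ) else 0 := by
        apply fmap_inj n r
        rw [fmap_apply, ← hsum, fmap_cO n r hr hk]
        rfl
      refine ⟨fun _ => ?_, fun h => DArrow.noConfusion h⟩
      rw [hc]
      exact pair_out n r lam hlam hr hk
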